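/- Let A be a Schur ring over the infinite dihedral group D∞, let i be a nonzero integer, suppose C = {z^i, z^{−i}} is a basic set of A, and let D be a basic set of A containing both s and z^i s. Then there is exactly one pair (x, y) ∈ C × D with xy = z^i s (i.e. the structure constant λ_{CDD} equals 1). -/

import Mathlib

open scoped BigOperators

/-- A Schur ring over the group `G` with coefficients in the field `F`, presented by its
partition into finite nonempty basic sets. -/
structure SchurRing (F : Type) [Field F] [CharZero F] (G : Type) [Group G] [DecidableEq G] where
  /-- the basic sets -/
  parts : Set (Finset G)
  nonempty : ∀ C ∈ parts, C.Nonempty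
  cover : ∀ g : G, ∃ C ∈ parts, g ∈ C
  eq_or_disjoint : ∀ C ∈ parts, ∀ D ∈ parts, C = D ∨ Disjoint C D
  one_mem : ({1} : Finset G) ∈ parts
  inv_mem : ∀ C ∈ parts, C.image (·⁻¹) ∈ parts
  mul_mem : ∀ C ∈ parts, ∀ D ∈ parts, ∃ S : Finset (Finset G),
    (↑S : Set (Finset G)) ⊆ parts ∧ ∃ coef : Finset G → F,
      (∑ g ∈ C, MonoidAlgebra.single g (1 : F)) * (∑ g ∈ D, MonoidAlgebra.single g (1 : F))
        = ∑ E ∈ S, coef E • ∑ g ∈ E, MonoidAlgebra.single g (1 : F)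

/-- A subset of `G` is an `A`-set if it is a union of basic sets of `A`. -/
def SchurRing.IsASet {F : Type} [Field F] [CharZero F] {G : Type} [Group G] [DecidableEq G]
    (A : SchurRing F G) (X : Set G) : Prop :=
  ∃ 𝒮 : Set (Finset G), 𝒮 ⊆ A.parts ∧ X = ⋃ C ∈ 𝒮, (C : Set G)

/-- The infinite dihedral group, realized as `DihedralGroup 0`. -/
abbrev Dinf : Type := DihedralGroup 0

/-- The generator `z` of infinite order. -/
def zz : Dinf := DihedralGroup.r 1

/-- The reflection `s` of order two. -/
def ss : Dinf := DihedralGroup.sr 0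

lemma eval_prod {F G : Type} [Field F] [CharZero F] [Group G] [DecidableEq G]
    (C D : Finset G) (h : G) :
    ((∑ g ∈ C, MonoidAlgebra.single g (1 : F)) * (∑ g ∈ D, MonoidAlgebra.single g (1 : F))).coeff h
      = (((C ×ˢ D).filter (fun p => p.1 * p.2 = h)).card : F) := by
  rw [Finset.sum_mul_sum]
  simp only [MonoidAlgebra.single_mul_single, one_mul]
  rw [← Finset.sum_product']
  rw [MonoidAlgebra.coeff_sum, Finsupp.finset_sum_apply]
  simp only [MonoidAlgebra.coeff_single, Finsupp.single_apply]
  rw [Finset.sum_boole]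

lemma lambda_const {F G : Type} [Field F] [CharZero F] [Group G] [DecidableEq G]
    (A : SchurRing F G) {C D E : Finset G} (hC : C ∈ A.parts) (hD : D ∈ A.parts)
    (hE : E ∈ A.parts) {g g' : G} (hg : g ∈ E) (hg' : g' ∈ E) :
    ((C ×ˢ D).filter (fun p => p.1 * p.2 = g)).card
      = ((C ×ˢ D).filter (fun p => p.1 * p.2 = g')).card := by
  obtain ⟨S, hS, coef, heq⟩ := A.mul_mem C hC D hD
  have hmem : ∀ E' ∈ S, (g ∈ E' ↔ g' ∈ E') := by
    intro E' hE'
    rcases A.eq_or_disjoint E hE E' (hS hE') with h | h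
    · rw [← h]; exact ⟨fun _ => hg', fun _ => hg⟩
    · constructor <;> intro hx <;> exact absurd hx (Finset.disjoint_left.mp h (by assumption))
  have key : (((C ×ˢ D).filter (fun p => p.1 * p.2 = g)).card : F)
      = (((C ×ˢ D).filter (fun p => p.1 * p.2 = g')).card : F) := by
    rw [← eval_prod, ← eval_prod, heq, MonoidAlgebra.coeff_sum,
      Finsupp.finset_sum_apply, Finsupp.finset_sum_apply]
    refine Finset.sum_congr rfl fun E' hE' => ?_
    rw [MonoidAlgebra.coeff_smul_apply, MonoidAlgebra.coeff_smul_apply, MonoidAlgebra.coeff_sum,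
      Finsupp.finset_sum_apply, Finsupp.finset_sum_apply]
    simp only [MonoidAlgebra.coeff_single, Finsupp.single_apply, Finset.sum_boole, Finset.filter_eq']
    by_cases h : g ∈ E'
    · simp [h, (hmem E' hE').mp h]
    · simp [h]
      exact Or.inr (fun h' => h ((hmem E' hE').mpr h'))
  exact_mod_cast key

lemma pair_card {G : Type} [Group G] [DecidableEq G] {a b : G} (hab : a ≠ b)
    (D : Finset G) (g : G) :
    (({a, b} ×ˢ D).filter (fun p => p.1 * p.2 = g)).card
      = (if a⁻¹ * g ∈ D then 1 else 0) + (if b⁻¹ * g ∈ D then 1 else 0) := by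
  have key : ∀ c : G, (∑ y ∈ D, if c * y = g then 1 else 0)
      = if c⁻¹ * g ∈ D then 1 else 0 := by
    intro c
    simp only [show ∀ y : G, (c * y = g) ↔ (y = c⁻¹ * g) from
      fun y => eq_inv_mul_iff_mul_eq.symm]
    simp [Finset.sum_ite_eq']
  rw [Finset.card_filter, Finset.sum_product, Finset.sum_pair hab]
  simp only [key]

lemma zz_zpow (n : ℤ) : zz ^ n = DihedralGroup.r n := by
  have hinv : (DihedralGroup.r 1 : DihedralGroup 0)⁻¹ = DihedralGroup.r (-1) :=
    inv_eq_of_mul_eq_one_right (by simp)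
  show (DihedralGroup.r 1 : DihedralGroup 0) ^ n = _
  induction n using Int.induction_on with
  | zero => exact DihedralGroup.r_zero.symm
  | succ k ih => rw [zpow_add, ih, zpow_one]; exact DihedralGroup.r_mul_r _ _
  | pred k ih => rw [sub_eq_add_neg, zpow_add, ih, zpow_neg, zpow_one, hinv]; exact DihedralGroup.r_mul_r _ _

/-- If `C = {z^i, z^(-i)}` (with `i ≠ 0`) is a basic set and `D` is a basic set containing both
`s` and `z^i s`, then there is exactly one pair `(x, y) ∈ C × D` with `x * y = z^i s`;
i.e. the structure constant `λ_{CDD}` equals `1`. -/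
theorem stmt_10 (F : Type) [Field F] [CharZero F] (A : SchurRing F Dinf)
    (i : ℤ) (hi : i ≠ 0)
    (hC : ({zz ^ i, zz ^ (-i)} : Finset Dinf) ∈ A.parts)
    (D : Finset Dinf) (hD : D ∈ A.parts) (hsD : ss ∈ D) (hzsD : zz ^ i * ss ∈ D) :
    ((({zz ^ i, zz ^ (-i)} : Finset Dinf) ×ˢ D).filter
        (fun p => p.1 * p.2 = zz ^ i * ss)).card = 1 := by
  have hzinj : Function.Injective (fun n : ℤ => zz ^ n) := by
    intro m n h
    simp only [zz_zpow] at h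
    injection h
  have hab : zz ^ i ≠ zz ^ (-i) := fun h => hi (by have := hzinj h; omega)
  have e1 : (zz ^ i)⁻¹ * (zz ^ i * ss) = ss := inv_mul_cancel_left _ _
  have e2 : (zz ^ (-i))⁻¹ * (zz ^ i * ss) = zz ^ (2 * i) * ss := by
    rw [zpow_neg, inv_inv, ← mul_assoc, ← zpow_add]; ring_nf
  rw [pair_card hab, e1, e2, if_pos hsD]
  -- suffices to show zz ^ (2*i) * ss ∉ D
  suffices h2 : zz ^ (2 * i) * ss ∉ D by rw [if_neg h2]
  intro hcon
  -- closure: every g ∈ D satisfies zz ^ i * g ∈ D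
  have hclosed : ∀ g ∈ D, zz ^ i * g ∈ D := by
    intro g hg
    have hc := lambda_const A hC hD hD hg hzsD
    rw [pair_card hab, pair_card hab, e1, e2, if_pos hsD, if_pos hcon] at hc
    by_contra hng
    have hx : (zz ^ (-i))⁻¹ * g = zz ^ i * g := by rw [zpow_neg, inv_inv]
    rw [hx, if_neg hng] at hc
    split at hc <;> omega
  have hmemk : ∀ k : ℕ, zz ^ (i * k) * ss ∈ D := by
    intro k
    induction k with
    | zero => simpa using hsD
    | succ k ih =>
      have := hclosed _ ih
      rw [← mul_assoc, ← zpow_add] at this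
      convert this using 3
      push_cast
      ring
  have hinf : (↑D : Set Dinf).Infinite := by
    apply Set.infinite_of_injective_forall_mem
      (f := fun k : ℕ => zz ^ (i * k) * ss)
    case hi =>
      intro m n h
      have h2 := hzinj (mul_right_cancel h)
      exact_mod_cast mul_left_cancel₀ hi h2
    case hf => exact fun k => hmemk k
  exact hinf D.finite_toSet
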